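/- Let V be a finite set, ∅ ≠ V_1 ⊊ V, and m = #(V ∖ V_1) + 1. Let v = (v_0, …, v_k) be a self-avoiding finite path with all entries in V ∖ V_1, and let V_1 = W_1 ⊊ W_2 ⊊ ⋯ ⊊ W_m = V be subsets such that #(W_{j+1} ∖ W_j) = 1 for every 1 ≤ j ≤ m−1 and W_{j+2} ∖ W_{j+1} = {v_j} for every 0 ≤ j ≤ k. Then for every finite path w on V satisfying 𝔏_{V_1}(w) = w and (𝔏(w))^{[V ∖ V_1]} ≠ v, one has (𝔏_{W_m} ∘ ⋯ ∘ 𝔏_{W_3} ∘ 𝔏_{W_2}(w))^{[V ∖ V_1]} ≠ v. -/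

import Mathlib

open MeasureTheory

namespace LERW

variable {V : Type*} [DecidableEq V]

/-- The suffix of `l` strictly after the last occurrence of `a` in `l`
(`l` itself if `a` does not occur in `l`). -/
def dropToLastOcc (a : V) (l : List V) : List V :=
  (l.reverse.takeWhile (fun z => z ≠ a)).reverse

lemma dropToLastOcc_length_le (a : V) (l : List V) :
    (dropToLastOcc a l).length ≤ l.length := by
  unfold dropToLastOcc
  calc ((l.reverse.takeWhile (fun z => z ≠ a)).reverse).length
      = (l.reverse.takeWhile (fun z => z ≠ a)).length := by simp
    _ ≤ l.reverse.length := (List.takeWhile_sublist _).length_le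
    _ = l.length := by simp

/-- Partial loop erasure `𝔏_S` of a finite path, associated with a set `S` of vertices. -/
def PLE (S : Finset V) : List V → List V
  | [] => []
  | a :: rest =>
    if a ∈ S then
      if a = (a :: rest).getLast (List.cons_ne_nil a rest) then [a]
      else a :: PLE S (dropToLastOcc a rest)
    else
      if rest = [] then [a]
      else a :: PLE S rest
termination_by l => l.length
decreasing_by
  · simpa using Nat.lt_succ_of_le (dropToLastOcc_length_le a rest)
  · simp

variable [Fintype V]

/-- The (full) loop erasure `𝔏 = 𝔏_V`. -/
def LE : List V → List V := PLE Finset.univ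

/-- Iterated partial loop erasure `𝔏_{W m} ∘ ⋯ ∘ 𝔏_{W 2} ∘ 𝔏_{W 1}`. -/
def iterPLE (W : ℕ → Finset V) : ℕ → List V → List V
  | 0, l => l
  | n + 1, l => PLE (W (n + 1)) (iterPLE W n l)

----------------------------------------------------------------
-- dropToLastOcc lemmas

lemma not_mem_dropToLastOcc (a : V) (l : List V) : a ∉ dropToLastOcc a l := by
  intro h
  have := List.mem_takeWhile_imp (List.mem_reverse.1 (by simpa [dropToLastOcc] using h))
  simp at this

lemma dropToLastOcc_sublist (a : V) (l : List V) : List.Sublist (dropToLastOcc a l) l := by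
  have : List.Sublist (l.reverse.takeWhile (fun z => z ≠ a)) l.reverse :=
    List.takeWhile_sublist _
  simpa [dropToLastOcc] using this.reverse

lemma dropToLastOcc_of_not_mem {a : V} {l : List V} (h : a ∉ l) : dropToLastOcc a l = l := by
  unfold dropToLastOcc
  rw [List.takeWhile_eq_self_iff.2]
  · simp
  · intro x hx; simp; rintro rfl; exact h (List.mem_reverse.1 hx)

lemma dropToLastOcc_nil (a : V) : dropToLastOcc a [] = [] := by simp [dropToLastOcc]

lemma dropToLastOcc_of_getLast {a : V} {t : List V}
    (h : (a :: t).getLast (List.cons_ne_nil a t) = a) : dropToLastOcc a t = [] := by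
  cases t with
  | nil => simp [dropToLastOcc]
  | cons b s =>
    have hne : (b :: s) ≠ [] := List.cons_ne_nil b s
    have hg : (b :: s).getLast hne = a := by
      rw [List.getLast_cons hne] at h; exact h
    have hrev : (b :: s).reverse = a :: (b :: s).dropLast.reverse := by
      conv_lhs => rw [← List.dropLast_append_getLast hne]
      rw [List.reverse_append, hg]; simp
    unfold dropToLastOcc
    rw [hrev, List.takeWhile_cons_of_neg (by simp)]
    simp

lemma length_dropToLastOcc_lt {a : V} {l : List V} (h : a ∈ l) :
    (dropToLastOcc a l).length < l.length := by
  have key : ∀ m : List V, a ∈ m → (m.takeWhile (fun z => z ≠ a)).length < m.length := by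
    intro m hm
    induction m with
    | nil => simp at hm
    | cons b s ih =>
      by_cases hb : b = a
      · rw [List.takeWhile_cons_of_neg (by simp [hb])]; simp
      · rw [List.takeWhile_cons_of_pos (by simp [hb])]
        have has : a ∈ s := by
          rcases List.mem_cons.1 hm with h' | h'
          · exact absurd h'.symm hb
          · exact h'
        simpa using ih has
  have := key l.reverse (List.mem_reverse.2 h)
  simpa [dropToLastOcc] using this


----------------------------------------------------------------
-- PLE lemmas

lemma PLE_nil (S : Finset V) : PLE S ([] : List V) = [] := by rw [PLE]

lemma PLE_cons_head (S : Finset V) (a : V) (rest : List V) :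
    ∃ t', PLE S (a :: rest) = a :: t' := by
  rw [PLE]
  split
  · split
    · exact ⟨[], rfl⟩
    · exact ⟨_, rfl⟩
  · split
    · exact ⟨[], rfl⟩
    · exact ⟨_, rfl⟩

lemma PLE_sublist (S : Finset V) (l : List V) : List.Sublist (PLE S l) l := by
  suffices h : ∀ n (l : List V), l.length ≤ n → List.Sublist (PLE S l) l from
    h l.length l le_rfl
  intro n
  induction n with
  | zero =>
    intro l hl
    rw [List.length_eq_zero_iff.1 (Nat.le_zero.1 hl), PLE]
  | succ n ih =>
    intro l hl
    cases l with
    | nil => rw [PLE]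
    | cons a rest =>
      rw [PLE]
      split
      · split
        · exact (List.singleton_sublist.2 (List.mem_cons_self))
        · exact List.cons_sublist_cons.2
            (((ih _ (le_trans (dropToLastOcc_length_le a rest) (by simpa using hl)))).trans
              (dropToLastOcc_sublist a rest))
      · split
        · exact (List.singleton_sublist.2 (List.mem_cons_self))
        · exact List.cons_sublist_cons.2 (ih _ (by simpa using hl))

lemma count_PLE_le_one (S : Finset V) {a : V} (ha : a ∈ S) (l : List V) :
    (PLE S l).count a ≤ 1 := by
  suffices h : ∀ n (l : List V), l.length ≤ n → (PLE S l).count a ≤ 1 from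
    h l.length l le_rfl
  intro n
  induction n with
  | zero =>
    intro l hl
    rw [List.length_eq_zero_iff.1 (Nat.le_zero.1 hl), PLE]; simp
  | succ n ih =>
    intro l hl
    cases l with
    | nil => rw [PLE]; simp
    | cons b rest =>
      rw [PLE]
      split
      · split
        · rw [List.count_singleton']; split <;> simp
        · rw [List.count_cons]
          by_cases hab : a = b
          · subst hab
            have h0 : (PLE S (dropToLastOcc a rest)).count a = 0 :=
              List.count_eq_zero.2 fun hmem =>
                not_mem_dropToLastOcc a rest ((PLE_sublist S _).mem hmem)
            simp [h0]
          · have hba : ¬ (b = a) := fun h => hab h.symm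
            simpa [hba] using ih _ (le_trans (dropToLastOcc_length_le b rest) (by simpa using hl))
      · rename_i hbS
        have hab : ¬ (a = b) := fun h => hbS (h ▸ ha)
        have hba : ¬ (b = a) := fun h => hab h.symm
        split
        · rw [List.count_singleton']; simp [hba]
        · rw [List.count_cons]
          simpa [hba] using ih _ (by simpa using hl)

lemma count_le_one_of_PLE_fixed {S : Finset V} {l : List V} (hfix : PLE S l = l) :
    ∀ a ∈ S, l.count a ≤ 1 := by
  suffices h : ∀ n (l : List V), l.length ≤ n → PLE S l = l → ∀ a ∈ S, l.count a ≤ 1 from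
    h l.length l le_rfl hfix
  intro n
  induction n with
  | zero =>
    intro l hl _ a _
    rw [List.length_eq_zero_iff.1 (Nat.le_zero.1 hl)]; simp
  | succ n ih =>
    intro l hl hfix a haS
    cases l with
    | nil => simp
    | cons b rest =>
      rw [PLE] at hfix
      by_cases hbS : b ∈ S
      · rw [if_pos hbS] at hfix
        by_cases hlast : b = (b :: rest).getLast (List.cons_ne_nil b rest)
        · rw [if_pos hlast] at hfix
          have : rest = [] := by simpa using hfix.symm
          subst this; rw [List.count_singleton']; split <;> simp
        · rw [if_neg hlast] at hfix
          have heq : PLE S (dropToLastOcc b rest) = rest := by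
            simpa using hfix
          have hbrest : b ∉ rest := by
            intro hb
            have h1 : (PLE S (dropToLastOcc b rest)).length ≤ (dropToLastOcc b rest).length :=
              (PLE_sublist S _).length_le
            have h2 : (dropToLastOcc b rest).length < rest.length :=
              length_dropToLastOcc_lt hb
            rw [heq] at h1; omega
          rw [dropToLastOcc_of_not_mem hbrest] at heq
          have hcount := ih rest (by simpa using hl) heq a haS
          rw [List.count_cons]
          by_cases hab : a = b
          · subst hab
            simp [List.count_eq_zero.2 hbrest]
          · have hba : ¬ (b = a) := fun h => hab h.symm
            simpa [hba] using hcount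
      · rw [if_neg hbS] at hfix
        by_cases hrest : rest = []
        · subst hrest; rw [List.count_singleton']; split <;> simp
        · rw [if_neg hrest] at hfix
          have heq : PLE S rest = rest := by simpa using hfix
          have hcount := ih rest (by simpa using hl) heq a haS
          have hba : ¬ (b = a) := fun h => hbS (h ▸ haS)
          rw [List.count_cons]
          simpa [hba] using hcount

lemma PLE_singleton_of_not_mem {x : V} {l : List V} (h : x ∉ l) : PLE {x} l = l := by
  induction l with
  | nil => rw [PLE]
  | cons a rest ih =>
    have hax : ¬ (a ∈ ({x} : Finset V)) := by
      simp only [Finset.mem_singleton]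
      rintro rfl; exact h (List.mem_cons_self)
    rw [PLE, if_neg hax]
    by_cases hrest : rest = []
    · subst hrest; simp
    · rw [if_neg hrest, ih fun hx => h (List.mem_cons_of_mem a hx)]

lemma PLE_singleton_cons {x a : V} (h : x ≠ a) (t : List V) :
    PLE {x} (a :: t) = a :: PLE {x} t := by
  have hax : ¬ (a ∈ ({x} : Finset V)) := by simp [h.symm]
  rw [PLE, if_neg hax]
  by_cases hrest : t = []
  · subst hrest; rw [if_pos rfl, PLE]
  · rw [if_neg hrest]

lemma PLE_singleton_self (a : V) (t : List V) :
    PLE {a} (a :: t) = a :: dropToLastOcc a t := by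
  rw [PLE, if_pos (Finset.mem_singleton_self a)]
  by_cases hlast : a = (a :: t).getLast (List.cons_ne_nil a t)
  · rw [if_pos hlast, dropToLastOcc_of_getLast hlast.symm]
  · rw [if_neg hlast, PLE_singleton_of_not_mem (not_mem_dropToLastOcc a t)]

lemma LE_cons (a : V) (t : List V) :
    LE (a :: t) = a :: LE (dropToLastOcc a t) := by
  unfold LE
  rw [PLE, if_pos (Finset.mem_univ a)]
  by_cases hlast : a = (a :: t).getLast (List.cons_ne_nil a t)
  · rw [if_pos hlast, dropToLastOcc_of_getLast hlast.symm, PLE_nil]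
  · rw [if_neg hlast]

lemma PLE_insert {S : Finset V} (x : V) :
    ∀ (l : List V), (∀ a ∈ S, l.count a ≤ 1) → PLE (insert x S) l = PLE {x} l := by
  suffices h : ∀ n (l : List V), l.length ≤ n → (∀ a ∈ S, l.count a ≤ 1) →
      PLE (insert x S) l = PLE {x} l from fun l => h l.length l le_rfl
  intro n
  induction n with
  | zero =>
    intro l hl _
    rw [List.length_eq_zero_iff.1 (Nat.le_zero.1 hl), PLE, PLE]
  | succ n ih =>
    intro l hl hcount
    cases l with
    | nil => rw [PLE, PLE]
    | cons a rest =>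
      by_cases hax : a = x
      · subst hax
        rw [PLE]
        rw [if_pos (Finset.mem_insert_self a S)]
        conv_rhs => rw [PLE, if_pos (Finset.mem_singleton_self a)]
        by_cases hlast : a = (a :: rest).getLast (List.cons_ne_nil a rest)
        · rw [if_pos hlast, if_pos hlast]
        · rw [if_neg hlast, if_neg hlast]
          congr 1
          exact ih _ (le_trans (dropToLastOcc_length_le a rest) (by simpa using hl))
            (fun b hb => le_trans
              (((dropToLastOcc_sublist a rest).count_le b).trans
                ((List.count_le_count_cons : rest.count b ≤ (a :: rest).count b))) (hcount b hb))
      · by_cases haS : a ∈ S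
        · -- a ∈ S, a ≠ x ; count a l ≤ 1 so a ∉ rest
          have hanotrest : a ∉ rest := by
            have := hcount a haS
            rw [List.count_cons_self] at this
            exact List.count_eq_zero.1 (by omega)
          rw [PLE, if_pos (Finset.mem_insert_of_mem haS)]
          by_cases hlast : a = (a :: rest).getLast (List.cons_ne_nil a rest)
          · rw [if_pos hlast]
            have hrest : rest = [] := by
              cases rest with
              | nil => rfl
              | cons b s =>
                exfalso
                apply hanotrest
                rw [List.getLast_cons (List.cons_ne_nil b s)] at hlast
                rw [hlast]
                exact List.getLast_mem _
            subst hrest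
            rw [PLE, if_neg (by simp [hax]), if_pos rfl]
          · rw [if_neg hlast, dropToLastOcc_of_not_mem hanotrest]
            rw [PLE_singleton_cons (fun h => hax h.symm)]
            congr 1
            exact ih _ (by simpa using hl)
              (fun b hb => le_trans (by simpa using (List.count_le_count_cons : rest.count b ≤ (a :: rest).count b)) (hcount b hb))
        · have hains : ¬ (a ∈ insert x S) := by simp [hax, haS]
          rw [PLE, if_neg hains, PLE_singleton_cons (fun h => hax h.symm)]
          by_cases hrest : rest = []
          · subst hrest; rw [if_pos rfl, PLE]
          · rw [if_neg hrest]
            congr 1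
            exact ih _ (by simpa using hl)
              (fun b hb => le_trans (by simpa using (List.count_le_count_cons : rest.count b ≤ (a :: rest).count b)) (hcount b hb))


----------------------------------------------------------------
-- chainPLE

def chainPLE : List V → List V → List V
  | [], w => w
  | x :: xs, w => chainPLE xs (PLE {x} w)

lemma chainPLE_nil_right : ∀ xs : List V, chainPLE xs [] = []
  | [] => rfl
  | x :: xs => by rw [chainPLE, PLE_nil, chainPLE_nil_right xs]

lemma chainPLE_append (as bs w : List V) :
    chainPLE (as ++ bs) w = chainPLE bs (chainPLE as w) := by
  induction as generalizing w with
  | nil => rfl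
  | cons x as ih => rw [List.cons_append, chainPLE, chainPLE, ih]

lemma chainPLE_cons {a : V} : ∀ {xs : List V}, (∀ x ∈ xs, x ≠ a) → ∀ t,
    chainPLE xs (a :: t) = a :: chainPLE xs t
  | [], _, t => rfl
  | x :: xs, h, t => by
    rw [chainPLE, PLE_singleton_cons (h x (List.mem_cons_self)) t,
      chainPLE_cons (fun y hy => h y (List.mem_cons_of_mem x hy)) (PLE {x} t), chainPLE]

lemma chainPLE_cons_head (a : V) : ∀ (xs t : List V),
    ∃ t', chainPLE xs (a :: t) = a :: t'
  | [], t => ⟨t, rfl⟩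
  | x :: xs, t => by
    obtain ⟨t₀, h₀⟩ := PLE_cons_head ({x} : Finset V) a t
    obtain ⟨t', h'⟩ := chainPLE_cons_head a xs t₀
    exact ⟨t', by rw [chainPLE, h₀, h']⟩

----------------------------------------------------------------
-- main combinatorial lemma

lemma chainPLE_eq_LE (p : V → Bool) :
    ∀ (n : ℕ) (w xs : List V), w.length ≤ n →
    (∀ z : V, p z = false → w.count z ≤ 1) →
    (∀ z ∈ w, p z = true → z ∈ xs) →
    xs.Nodup → (∀ x ∈ xs, p x = true) →
    (chainPLE xs w).filter p <+: xs →
    chainPLE xs w = LE w := by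
  intro n
  induction n with
  | zero =>
    intro w xs hl _ _ _ _ _
    rw [List.length_eq_zero_iff.1 (Nat.le_zero.1 hl), chainPLE_nil_right]
    rw [LE, PLE_nil]
  | succ n ih =>
    intro w xs hl hcount hmem hnodup hpxs hpre
    cases w with
    | nil => rw [chainPLE_nil_right, LE, PLE_nil]
    | cons a t =>
      by_cases hpa : p a = true
      · -- a must be the head of xs
        have haxs : a ∈ xs := hmem a (List.mem_cons_self) hpa
        cases xs with
        | nil => simp at haxs
        | cons y ys =>
          obtain ⟨t'', e⟩ := chainPLE_cons_head a (y :: ys) t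
          have hay : a = y := by
            rw [e, List.filter_cons_of_pos hpa] at hpre
            exact (List.cons_prefix_cons.1 hpre).1
          subst hay
          have haNys : a ∉ ys := (List.nodup_cons.1 hnodup).1
          set t₁ := dropToLastOcc a t with ht₁
          have hstep : chainPLE (a :: ys) (a :: t) = a :: chainPLE ys t₁ := by
            rw [chainPLE, PLE_singleton_self, chainPLE_cons (fun x hx h => haNys (by rwa [h] at hx)) t₁]
          have hpre' : (chainPLE ys t₁).filter p <+: ys := by
            rw [hstep, List.filter_cons_of_pos hpa] at hpre
            exact (List.cons_prefix_cons.1 hpre).2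
          have ht₁sub : List.Sublist t₁ t := dropToLastOcc_sublist a t
          have hmain : chainPLE ys t₁ = LE t₁ := by
            refine ih t₁ ys ?_ ?_ ?_ (List.nodup_cons.1 hnodup).2
              (fun x hx => hpxs x (List.mem_cons_of_mem a hx)) hpre'
            · rw [ht₁]
              have := dropToLastOcc_length_le a t
              simp only [List.length_cons] at hl
              omega
            · intro z hz
              exact le_trans (ht₁sub.count_le z)
                (le_trans ((List.count_le_count_cons : t.count z ≤ (a :: t).count z)) (hcount z hz))
            · intro z hz hpz
              have hzt : z ∈ t := ht₁sub.mem hz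
              have : z ∈ a :: ys := hmem z (List.mem_cons_of_mem a hzt) hpz
              rcases List.mem_cons.1 this with h' | h'
              · exfalso
                apply not_mem_dropToLastOcc a t
                rw [← ht₁]
                rwa [h'] at hz
              · exact h'
          rw [hstep, hmain, LE_cons]
      · -- head not counted: commute past it
        have hpa' : p a = false := by simpa using hpa
        have hxne : ∀ x ∈ xs, x ≠ a := fun x hx h => by
          subst h
          rw [hpxs x hx] at hpa'
          simp at hpa'
        have hat : a ∉ t := by
          have := hcount a hpa'
          rw [List.count_cons_self] at this
          exact List.count_eq_zero.1 (by omega)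
        have hstep : chainPLE xs (a :: t) = a :: chainPLE xs t := chainPLE_cons hxne t
        have hmain : chainPLE xs t = LE t := by
          refine ih t xs (by simpa using hl) ?_
            (fun z hz hpz => hmem z (List.mem_cons_of_mem a hz) hpz) hnodup hpxs ?_
          · intro z hz
            exact le_trans ((List.count_le_count_cons : t.count z ≤ (a :: t).count z)) (hcount z hz)
          · rw [hstep, List.filter_cons_of_neg (by simp [hpa'])] at hpre
            exact hpre
        rw [hstep, hmain, LE_cons, dropToLastOcc_of_not_mem hat]


/-- The remaining suffix `w|_{[n_j , η]}` of the loop-erasing walk of `𝔏` the first time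
its current value equals `b` (`[]` if this never happens). -/
def LEsuffixAt (b : V) : List V → List V
  | [] => []
  | a :: rest =>
    if a = b then a :: rest
    else if a = (a :: rest).getLast (List.cons_ne_nil a rest) then []
    else LEsuffixAt b (dropToLastOcc a rest)
termination_by l => l.length
decreasing_by
  simpa using Nat.lt_succ_of_le (dropToLastOcc_length_le a rest)

/-- Entry time `τ_A` into `A ⊆ V`, valued in `ℕ∞`. -/
noncomputable def entryTime (A : Finset V) (ω : ℕ → V) : ℕ∞ :=
  sInf {m : ℕ∞ | ∃ n : ℕ, m = (n : ℕ∞) ∧ ω n ∈ A}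

/-- Entry time `τ_A` as a natural number (junk value `0` when `A` is never visited). -/
noncomputable def entryTimeNat (A : Finset V) (ω : ℕ → V) : ℕ :=
  sInf {n : ℕ | ω n ∈ A}

/-- The random finite path `X|_{[0, τ_A]} = (X_0, X_1, …, X_{τ_A})`. -/
noncomputable def stoppedPath (A : Finset V) (ω : ℕ → V) : List V :=
  (List.range (entryTimeNat A ω + 1)).map ω

/-- Iterated hitting times `τ̊_W^{(n)}` of `W`, valued in `ℕ∞` (with the convention
`τ̊_W^{(0)} = 0`). -/
noncomputable def iterHit (W : Finset V) (ω : ℕ → V) : ℕ → ℕ∞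
  | 0 => 0
  | n + 1 => sInf {m : ℕ∞ | ∃ k : ℕ, m = (k : ℕ∞) ∧ iterHit W ω n < (k : ℕ∞) ∧ ω k ∈ W}

/-- The time `τ̊_W^{(n)} ∧ τ_A`, as a natural number. -/
noncomputable def traceTime (W A : Finset V) (ω : ℕ → V) (n : ℕ) : ℕ :=
  (iterHit W ω n ⊓ entryTime A ω).toNat

variable [MeasurableSpace V]

/-- The trace process `X̃_n = X_{τ̊_W^{(n)} ∧ τ_A}` (so `X̃_0 = X_0`). -/
noncomputable def traceProc (W A : Finset V) (ω : ℕ → V) (n : ℕ) : V :=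
  ω (traceTime W A ω n)

/-- The Green function `G_B(x, y) = 𝔼_x(#{0 ≤ n < τ_{V∖B} : X_n = y})`. -/
noncomputable def green (μ : V → Measure (ℕ → V)) (B : Finset V) (x y : V) : ℝ :=
  ∑' n : ℕ, (μ x {ω | ω n = y ∧ ∀ k ≤ n, ω k ∈ B}).toReal

theorem iterPLE_projection_ne_of_LE_projection_ne
    {V : Type*} [Fintype V] [DecidableEq V]
    (V₁ : Finset V) (hV₁ : V₁.Nonempty) (hV₁ne : V₁ ≠ Finset.univ)
    (k : ℕ) (v : ℕ → V)
    (hvinj : ∀ i ≤ k, ∀ j ≤ k, v i = v j → i = j)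
    (hvout : ∀ j ≤ k, v j ∉ V₁)
    (W : ℕ → Finset V)
    (hW1 : W 1 = V₁)
    (hWm : W ((Finset.univ \ V₁).card + 1) = Finset.univ)
    (hWstep : ∀ j : ℕ, 1 ≤ j → j ≤ (Finset.univ \ V₁).card →
      W j ⊆ W (j + 1) ∧ (W (j + 1) \ W j).card = 1)
    (hWv : ∀ j ≤ k, W (j + 2) \ W (j + 1) = {v j})
    (w : List V) (hwfix : PLE V₁ w = w)
    (hwproj : (LE w).filter (fun z => z ∉ V₁) ≠ (List.range (k + 1)).map v) :
    (iterPLE (fun n => W (n + 1)) (Finset.univ \ V₁).card w).filter (fun z => z ∉ V₁) ≠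
      (List.range (k + 1)).map v := by
  intro hcontra
  apply hwproj
  set N := (Finset.univ \ V₁).card with hN
  set u : ℕ → List V := fun n => iterPLE (fun n => W (n + 1)) n w with hu
  -- the chain invariant
  have key : ∀ n, n ≤ N → ∃ xs : List V,
      xs.length = n ∧ xs.Nodup ∧ (∀ x ∈ xs, x ∉ V₁) ∧
      (∀ z : V, z ∈ W (n + 1) ↔ z ∈ V₁ ∨ z ∈ xs) ∧
      chainPLE xs w = u n ∧
      (∀ a ∈ W (n + 1), (u n).count a ≤ 1) ∧
      (∀ j, j < n → j ≤ k → xs[j]? = some (v j)) := by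
    intro n
    induction n with
    | zero =>
      intro _
      refine ⟨[], rfl, List.nodup_nil, by simp, ?_, rfl, ?_, by omega⟩
      · intro z; rw [hW1]; simp
      · intro a ha
        rw [hW1] at ha
        exact count_le_one_of_PLE_fixed hwfix a ha
    | succ n ihn =>
      intro hn1
      obtain ⟨xs, hlen, hnodup, hout, hiff, hchain, hcnt, hpos⟩ := ihn (by omega)
      obtain ⟨hsub, hcard⟩ := hWstep (n + 1) (by omega) (by omega)
      obtain ⟨x, hx⟩ := Finset.card_eq_one.1 hcard
      have hxmem : x ∈ W (n + 1 + 1) \ W (n + 1) := by rw [hx]; exact Finset.mem_singleton_self x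
      have hxin : x ∈ W (n + 2) := (Finset.mem_sdiff.1 hxmem).1
      have hxnot : x ∉ W (n + 1) := (Finset.mem_sdiff.1 hxmem).2
      have hins : W (n + 2) = insert x (W (n + 1)) := by
        ext z
        simp only [Finset.mem_insert]
        constructor
        · intro hz
          by_cases hz1 : z ∈ W (n + 1)
          · exact Or.inr hz1
          · left
            have : z ∈ W (n + 1 + 1) \ W (n + 1) := Finset.mem_sdiff.2 ⟨hz, hz1⟩
            rw [hx] at this
            exact Finset.mem_singleton.1 this
        · rintro (rfl | hz)
          · exact hxin
          · exact hsub hz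
      have hxnotxs : x ∉ xs := fun h => hxnot ((hiff x).2 (Or.inr h))
      have hxnotV₁ : x ∉ V₁ := fun h => hxnot ((hiff x).2 (Or.inl h))
      have hunsucc : u (n + 1) = PLE (W (n + 2)) (u n) := rfl
      have hchain' : chainPLE (xs ++ [x]) w = u (n + 1) := by
        rw [chainPLE_append, hchain, hunsucc, hins,
          PLE_insert x (u n) (fun a ha => hcnt a ha), chainPLE, chainPLE]
      refine ⟨xs ++ [x], by simp [hlen], ?_, ?_, ?_, hchain', ?_, ?_⟩
      · simp [List.nodup_append, hnodup, hxnotxs]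
        rintro a ha rfl; exact hxnotxs ha
      · intro y hy
        rcases List.mem_append.1 hy with h' | h'
        · exact hout y h'
        · rw [List.mem_singleton.1 h']
          exact hxnotV₁
      · intro z
        rw [hins]
        simp only [Finset.mem_insert, List.mem_append, List.mem_singleton, hiff z]
        tauto
      · intro a ha
        rw [hunsucc]
        exact count_PLE_le_one _ ha _
      · intro j hj hjk
        rcases Nat.lt_succ_iff_lt_or_eq.1 hj with h' | h'
        · rw [List.getElem?_append, if_pos (by omega)]
          exact hpos j h' hjk
        · subst h'
          have : x = v j := by
            have := hWv j hjk
            rw [this] at hx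
            exact Finset.mem_singleton.1 (hx ▸ Finset.mem_singleton_self x)
          have hget : (xs ++ [x])[j]? = some x := by
            rw [← hlen]
            exact List.getElem?_concat_length
          rw [hget, this]
  obtain ⟨xs, hlen, hnodup, hout, hiff, hchain, hcnt, hpos⟩ := key N le_rfl
  -- k + 1 ≤ N
  have hk1N : k + 1 ≤ N := by
    have hcardim : ((Finset.range (k + 1)).image v).card = k + 1 := by
      rw [Finset.card_image_of_injOn, Finset.card_range]
      intro i hi j hj hij
      exact hvinj i (by simpa [Nat.lt_succ_iff] using hi) j
        (by simpa [Nat.lt_succ_iff] using hj) hij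
    have hsub : (Finset.range (k + 1)).image v ⊆ Finset.univ \ V₁ := by
      intro z hz
      obtain ⟨j, hj, rfl⟩ := Finset.mem_image.1 hz
      rw [Finset.mem_range, Nat.lt_succ_iff] at hj
      exact Finset.mem_sdiff.2 ⟨Finset.mem_univ _, hvout j hj⟩
    calc k + 1 = ((Finset.range (k + 1)).image v).card := hcardim.symm
      _ ≤ (Finset.univ \ V₁).card := Finset.card_le_card hsub
      _ = N := hN.symm
  -- every non-V₁ element lies in xs
  have htotal : ∀ z : V, z ∉ V₁ → z ∈ xs := by
    intro z hz
    have : z ∈ W (N + 1) := by rw [hWm]; exact Finset.mem_univ z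
    rcases (hiff z).1 this with h' | h'
    · exact absurd h' hz
    · exact h'
  -- the target equals take (k+1) xs
  have htake : (List.range (k + 1)).map v = xs.take (k + 1) := by
    apply List.ext_getElem?
    intro i
    by_cases hi : i < k + 1
    · rw [List.getElem?_take, if_pos hi, List.getElem?_map, List.getElem?_range hi]
      have := hpos i (by omega) (by omega)
      rw [this]
      rfl
    · rw [List.getElem?_eq_none (by simpa using hi),
        List.getElem?_eq_none (by simp; omega)]
  -- apply the main lemma
  have hmain : chainPLE xs w = LE w := by
    refine chainPLE_eq_LE (fun z => z ∉ V₁) w.length w xs le_rfl ?_ ?_ hnodup ?_ ?_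
    · intro z hz
      have hz' : z ∈ V₁ := by simpa using hz
      exact count_le_one_of_PLE_fixed hwfix z hz'
    · intro z _ hz
      exact htotal z (by simpa using hz)
    · intro x hxx
      simpa using hout x hxx
    · rw [hchain, hcontra, htake]
      exact List.take_prefix _ _
  rw [← hmain, hchain, hcontra]


end LERW
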